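/- Under the hypotheses guaranteeing f^α ∈ dom(E) (in particular ‖α‖_∞ ≤ 1/√(3·5ⁿ)), the α-fractal operator F^α : dom(E) → dom(E), f ↦ f^α, is bounded with respect to the energy seminorm ‖u‖_E = √(E(u)), with ‖F^α‖_E ≤ √((3 + 3·5ⁿ‖α‖²‖T‖)/(1 − 3·5ⁿ‖α‖²)). -/

import Mathlib

noncomputable section

open Metric Set Filter Topology

/-- The plane with the Euclidean norm. -/
abbrev E2 := EuclideanSpace ℝ (Fin 2)

/-- The contraction `L_i(x) = (x - q_i)/2 + q_i` towards the vertex `q i`. -/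
def Lmap (q : Fin 3 → E2) (i : Fin 3) (x : E2) : E2 := midpoint ℝ x (q i)

/-- Composite map `L_ω = L_{w₁} ∘ ⋯ ∘ L_{wₙ}` for a word `ω`. -/
def Lw (q : Fin 3 → E2) : List (Fin 3) → E2 → E2
  | [] => id
  | i :: w => Lmap q i ∘ Lw q w

/-- The three vertices of the cell indexed by the word `w`. -/
def cellVerts (q : Fin 3 → E2) (w : List (Fin 3)) : Set E2 :=
  Lw q w '' {q 0, q 1, q 2}

/-- `x ∼ₘ y` : `x` and `y` are vertices of a common level-`m` cell. -/
def SameCell (q : Fin 3 → E2) (m : ℕ) (x y : E2) : Prop :=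
  ∃ w : List (Fin 3), w.length = m ∧ x ∈ cellVerts q w ∧ y ∈ cellVerts q w

/-- The Sierpiński gasket: closure of the set of all vertices of all cells. -/
def gasket (q : Fin 3 → E2) : Set E2 :=
  closure (⋃ w : List (Fin 3), cellVerts q w)

/-- `q₁, q₂, q₃` are equidistant points. -/
def Equidistant (q : Fin 3 → E2) : Prop :=
  ∀ i j, i ≠ j → dist (q i) (q j) = 1

/-- A function is harmonic iff its vertex values satisfy the "1/5-2/5" rule on
every cell: `h(q_{ωij}) = (2/5) h(q_{ωi}) + (2/5) h(q_{ωj}) + (1/5) h(q_{ωk})`. -/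
def Harmonic (q : Fin 3 → E2) (h : E2 → ℝ) : Prop :=
  ∀ w : List (Fin 3), ∀ i j k : Fin 3, i ≠ j → j ≠ k → i ≠ k →
    h (Lw q w (midpoint ℝ (q i) (q j))) =
      2/5 * h (Lw q w (q i)) + 2/5 * h (Lw q w (q j)) + 1/5 * h (Lw q w (q k))

/-- The `m`-th level renormalized energy
`E^{(m)}(u) = (5/3)^m ∑_{x ∼ₘ y} |u(x) - u(y)|²`, the inner sum ranging over the
three edges of each of the `3^m` level-`m` cells. -/
noncomputable def energyM (q : Fin 3 → E2) (u : E2 → ℝ) (m : ℕ) : ℝ :=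
  (5/3 : ℝ) ^ m * ∑ w : Fin m → Fin 3,
    ∑ p ∈ ({((0 : Fin 3), (1 : Fin 3)), (0, 2), (1, 2)} : Finset (Fin 3 × Fin 3)),
      (u (Lw q (List.ofFn w) (q p.1)) - u (Lw q (List.ofFn w) (q p.2))) ^ 2

lemma Lw_append (q : Fin 3 → E2) (l1 l2 : List (Fin 3)) (x : E2) :
    Lw q (l1 ++ l2) x = Lw q l1 (Lw q l2 x) := by
  induction l1 with
  | nil => simp [Lw]
  | cons i t ih => simp [Lw, ih]

lemma Lw_mem_gasket (q : Fin 3 → E2) (w : List (Fin 3)) (i : Fin 3) :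
    Lw q w (q i) ∈ gasket q := by
  apply subset_closure
  refine mem_iUnion.2 ⟨w, ⟨q i, ?_, rfl⟩⟩
  fin_cases i <;> simp

lemma energyM_nonneg (q : Fin 3 → E2) (u : E2 → ℝ) (m : ℕ) : 0 ≤ energyM q u m := by
  apply mul_nonneg (by positivity)
  exact Finset.sum_nonneg fun w _ => Finset.sum_nonneg fun p _ => sq_nonneg _

lemma energy_reindex (q : Fin 3 → E2) (u : E2 → ℝ) (n k : ℕ) :
    (∑ w : Fin (n + k) → Fin 3,
      ∑ p ∈ ({((0 : Fin 3), (1 : Fin 3)), (0, 2), (1, 2)} : Finset (Fin 3 × Fin 3)),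
        (u (Lw q (List.ofFn w) (q p.1)) - u (Lw q (List.ofFn w) (q p.2))) ^ 2)
    = ∑ ω : Fin n → Fin 3, ∑ w' : Fin k → Fin 3,
        ∑ p ∈ ({((0 : Fin 3), (1 : Fin 3)), (0, 2), (1, 2)} : Finset (Fin 3 × Fin 3)),
          (u (Lw q (List.ofFn ω) (Lw q (List.ofFn w') (q p.1)))
            - u (Lw q (List.ofFn ω) (Lw q (List.ofFn w') (q p.2)))) ^ 2 := by
  rw [← Equiv.sum_comp (Fin.appendEquiv n k), Fintype.sum_prod_type]
  apply Finset.sum_congr rfl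
  intro a _
  apply Finset.sum_congr rfl
  intro b _
  simp [Fin.appendEquiv, List.ofFn_fin_append, Lw_append]

lemma key_step (q : Fin 3 → E2) (n k : ℕ) (α : (Fin n → Fin 3) → ℝ)
    (f Tf fα : E2 → ℝ) (A : ℝ) (hA : ∀ ω, |α ω| ≤ A)
    (hself : ∀ ω : Fin n → Fin 3, ∀ x ∈ gasket q,
      fα (Lw q (List.ofFn ω) x) = f (Lw q (List.ofFn ω) x) + α ω * (fα x - Tf x)) :
    energyM q fα (n + k) ≤ 3 * energyM q f (n + k)
      + 3 * 5 ^ n * A ^ 2 * (energyM q fα k + energyM q Tf k) := by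
  have hA0 : 0 ≤ A := le_trans (abs_nonneg _) (hA (fun _ => 0))
  set edges : Finset (Fin 3 × Fin 3) := {((0 : Fin 3), (1 : Fin 3)), (0, 2), (1, 2)} with hedges
  -- inner-sum notation
  set Q : (E2 → ℝ) → (Fin k → Fin 3) → ℝ := fun u w' =>
    ∑ p ∈ edges, (u (Lw q (List.ofFn w') (q p.1)) - u (Lw q (List.ofFn w') (q p.2))) ^ 2
    with hQ
  have hQnonneg : ∀ u w', 0 ≤ Q u w' :=
    fun u w' => Finset.sum_nonneg fun p _ => sq_nonneg _
  -- pointwise estimate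
  have hpt : ∀ (ω : Fin n → Fin 3) (w' : Fin k → Fin 3),
      (∑ p ∈ edges, (fα (Lw q (List.ofFn ω) (Lw q (List.ofFn w') (q p.1)))
          - fα (Lw q (List.ofFn ω) (Lw q (List.ofFn w') (q p.2)))) ^ 2)
      ≤ 3 * (∑ p ∈ edges, (f (Lw q (List.ofFn ω) (Lw q (List.ofFn w') (q p.1)))
          - f (Lw q (List.ofFn ω) (Lw q (List.ofFn w') (q p.2)))) ^ 2)
        + 3 * α ω ^ 2 * (Q fα w' + Q Tf w') := by
    intro ω w'
    have hv : ∀ i : Fin 3, fα (Lw q (List.ofFn ω) (Lw q (List.ofFn w') (q i)))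
        = f (Lw q (List.ofFn ω) (Lw q (List.ofFn w') (q i)))
          + α ω * (fα (Lw q (List.ofFn w') (q i)) - Tf (Lw q (List.ofFn w') (q i))) :=
      fun i => hself ω _ (Lw_mem_gasket q _ i)
    have hexp : ∀ p : Fin 3 × Fin 3,
        (fα (Lw q (List.ofFn ω) (Lw q (List.ofFn w') (q p.1)))
          - fα (Lw q (List.ofFn ω) (Lw q (List.ofFn w') (q p.2)))) ^ 2
        ≤ 3 * (f (Lw q (List.ofFn ω) (Lw q (List.ofFn w') (q p.1)))
            - f (Lw q (List.ofFn ω) (Lw q (List.ofFn w') (q p.2)))) ^ 2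
          + 3 * α ω ^ 2 * ((fα (Lw q (List.ofFn w') (q p.1)) - fα (Lw q (List.ofFn w') (q p.2))) ^ 2
            + (Tf (Lw q (List.ofFn w') (q p.1)) - Tf (Lw q (List.ofFn w') (q p.2))) ^ 2) := by
      intro p
      rw [hv p.1, hv p.2]
      set a := f (Lw q (List.ofFn ω) (Lw q (List.ofFn w') (q p.1)))
          - f (Lw q (List.ofFn ω) (Lw q (List.ofFn w') (q p.2)))
      set b := fα (Lw q (List.ofFn w') (q p.1)) - fα (Lw q (List.ofFn w') (q p.2))
      set c := Tf (Lw q (List.ofFn w') (q p.1)) - Tf (Lw q (List.ofFn w') (q p.2))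
      have : (a + α ω * (b - c)) ^ 2 ≤ 3 * a ^ 2 + 3 * α ω ^ 2 * (b ^ 2 + c ^ 2) := by
        nlinarith [sq_nonneg (a - α ω * b), sq_nonneg (a + α ω * c), sq_nonneg (α ω * b - α ω * c),
          sq_nonneg (a - α ω * b + α ω * c)]
      calc (f (Lw q (List.ofFn ω) (Lw q (List.ofFn w') (q p.1)))
            + α ω * (fα (Lw q (List.ofFn w') (q p.1)) - Tf (Lw q (List.ofFn w') (q p.1)))
            - (f (Lw q (List.ofFn ω) (Lw q (List.ofFn w') (q p.2)))
            + α ω * (fα (Lw q (List.ofFn w') (q p.2)) - Tf (Lw q (List.ofFn w') (q p.2))))) ^ 2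
          = (a + α ω * (b - c)) ^ 2 := by simp only [a, b, c]; ring
        _ ≤ 3 * a ^ 2 + 3 * α ω ^ 2 * (b ^ 2 + c ^ 2) := this
        _ = _ := by ring
    calc (∑ p ∈ edges, (fα (Lw q (List.ofFn ω) (Lw q (List.ofFn w') (q p.1)))
          - fα (Lw q (List.ofFn ω) (Lw q (List.ofFn w') (q p.2)))) ^ 2)
        ≤ ∑ p ∈ edges, (3 * (f (Lw q (List.ofFn ω) (Lw q (List.ofFn w') (q p.1)))
            - f (Lw q (List.ofFn ω) (Lw q (List.ofFn w') (q p.2)))) ^ 2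
          + 3 * α ω ^ 2 * ((fα (Lw q (List.ofFn w') (q p.1)) - fα (Lw q (List.ofFn w') (q p.2))) ^ 2
            + (Tf (Lw q (List.ofFn w') (q p.1)) - Tf (Lw q (List.ofFn w') (q p.2))) ^ 2)) :=
          Finset.sum_le_sum fun p _ => hexp p
      _ = _ := by
          simp only [hQ]
          rw [Finset.sum_add_distrib, ← Finset.mul_sum, ← Finset.mul_sum,
            Finset.sum_add_distrib]
  -- assemble
  have hα2 : ∑ ω : Fin n → Fin 3, α ω ^ 2 ≤ 3 ^ n * A ^ 2 := by
    calc ∑ ω : Fin n → Fin 3, α ω ^ 2 ≤ ∑ _ω : Fin n → Fin 3, A ^ 2 :=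
        Finset.sum_le_sum fun ω _ => by
          have h1 := hA ω
          nlinarith [abs_nonneg (α ω), sq_abs (α ω)]
      _ = 3 ^ n * A ^ 2 := by
          rw [Finset.sum_const, Finset.card_univ]
          simp [nsmul_eq_mul]
  set X := ∑ w' : Fin k → Fin 3, Q fα w' with hX
  set Y := ∑ w' : Fin k → Fin 3, Q Tf w' with hY
  have hX0 : 0 ≤ X := Finset.sum_nonneg fun w' _ => hQnonneg fα w'
  have hY0 : 0 ≤ Y := Finset.sum_nonneg fun w' _ => hQnonneg Tf w'
  have main : (∑ ω : Fin n → Fin 3, ∑ w' : Fin k → Fin 3,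
        ∑ p ∈ edges, (fα (Lw q (List.ofFn ω) (Lw q (List.ofFn w') (q p.1)))
          - fα (Lw q (List.ofFn ω) (Lw q (List.ofFn w') (q p.2)))) ^ 2)
      ≤ 3 * (∑ ω : Fin n → Fin 3, ∑ w' : Fin k → Fin 3,
          ∑ p ∈ edges, (f (Lw q (List.ofFn ω) (Lw q (List.ofFn w') (q p.1)))
            - f (Lw q (List.ofFn ω) (Lw q (List.ofFn w') (q p.2)))) ^ 2)
        + 3 * 3 ^ n * A ^ 2 * (X + Y) := by
    calc (∑ ω : Fin n → Fin 3, ∑ w' : Fin k → Fin 3,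
          ∑ p ∈ edges, (fα (Lw q (List.ofFn ω) (Lw q (List.ofFn w') (q p.1)))
            - fα (Lw q (List.ofFn ω) (Lw q (List.ofFn w') (q p.2)))) ^ 2)
        ≤ ∑ ω : Fin n → Fin 3, (3 * (∑ w' : Fin k → Fin 3,
            ∑ p ∈ edges, (f (Lw q (List.ofFn ω) (Lw q (List.ofFn w') (q p.1)))
              - f (Lw q (List.ofFn ω) (Lw q (List.ofFn w') (q p.2)))) ^ 2)
          + α ω ^ 2 * (3 * (X + Y))) := by
          apply Finset.sum_le_sum
          intro ω _
          calc (∑ w' : Fin k → Fin 3,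
              ∑ p ∈ edges, (fα (Lw q (List.ofFn ω) (Lw q (List.ofFn w') (q p.1)))
                - fα (Lw q (List.ofFn ω) (Lw q (List.ofFn w') (q p.2)))) ^ 2)
              ≤ ∑ w' : Fin k → Fin 3, (3 * (∑ p ∈ edges,
                  (f (Lw q (List.ofFn ω) (Lw q (List.ofFn w') (q p.1)))
                    - f (Lw q (List.ofFn ω) (Lw q (List.ofFn w') (q p.2)))) ^ 2)
                + 3 * α ω ^ 2 * (Q fα w' + Q Tf w')) :=
                Finset.sum_le_sum fun w' _ => hpt ω w'
            _ = 3 * (∑ w' : Fin k → Fin 3,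
                  ∑ p ∈ edges, (f (Lw q (List.ofFn ω) (Lw q (List.ofFn w') (q p.1)))
                    - f (Lw q (List.ofFn ω) (Lw q (List.ofFn w') (q p.2)))) ^ 2)
                + α ω ^ 2 * (3 * (X + Y)) := by
                rw [Finset.sum_add_distrib, ← Finset.mul_sum, ← Finset.mul_sum,
                  Finset.sum_add_distrib, hX, hY]
                ring
      _ = 3 * (∑ ω : Fin n → Fin 3, ∑ w' : Fin k → Fin 3,
            ∑ p ∈ edges, (f (Lw q (List.ofFn ω) (Lw q (List.ofFn w') (q p.1)))
              - f (Lw q (List.ofFn ω) (Lw q (List.ofFn w') (q p.2)))) ^ 2)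
          + (∑ ω : Fin n → Fin 3, α ω ^ 2) * (3 * (X + Y)) := by
          rw [Finset.sum_add_distrib, ← Finset.mul_sum, ← Finset.sum_mul]
      _ ≤ 3 * (∑ ω : Fin n → Fin 3, ∑ w' : Fin k → Fin 3,
            ∑ p ∈ edges, (f (Lw q (List.ofFn ω) (Lw q (List.ofFn w') (q p.1)))
              - f (Lw q (List.ofFn ω) (Lw q (List.ofFn w') (q p.2)))) ^ 2)
          + 3 * 3 ^ n * A ^ 2 * (X + Y) := by
          have h3 : (0:ℝ) ≤ 3 * (X + Y) := by positivity
          nlinarith [mul_le_mul_of_nonneg_right hα2 h3]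
  have hmul := mul_le_mul_of_nonneg_left main
    (by positivity : (0:ℝ) ≤ (5/3 : ℝ) ^ (n + k))
  have h5 : ((5:ℝ)) ^ n = (5/3 : ℝ) ^ n * 3 ^ n := by
    rw [← mul_pow]; norm_num
  simp only [energyM, ← hedges]
  rw [energy_reindex q fα n k, energy_reindex q f n k]
  simp only [← hedges, ← hQ, ← hX, ← hY]
  calc (5/3 : ℝ) ^ (n + k) * (∑ ω : Fin n → Fin 3, ∑ w' : Fin k → Fin 3,
        ∑ p ∈ edges, (fα (Lw q (List.ofFn ω) (Lw q (List.ofFn w') (q p.1)))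
          - fα (Lw q (List.ofFn ω) (Lw q (List.ofFn w') (q p.2)))) ^ 2)
      ≤ (5/3 : ℝ) ^ (n + k) * (3 * (∑ ω : Fin n → Fin 3, ∑ w' : Fin k → Fin 3,
          ∑ p ∈ edges, (f (Lw q (List.ofFn ω) (Lw q (List.ofFn w') (q p.1)))
            - f (Lw q (List.ofFn ω) (Lw q (List.ofFn w') (q p.2)))) ^ 2)
        + 3 * 3 ^ n * A ^ 2 * (X + Y)) := hmul
    _ = 3 * ((5/3 : ℝ) ^ (n + k) * (∑ ω : Fin n → Fin 3, ∑ w' : Fin k → Fin 3,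
          ∑ p ∈ edges, (f (Lw q (List.ofFn ω) (Lw q (List.ofFn w') (q p.1)))
            - f (Lw q (List.ofFn ω) (Lw q (List.ofFn w') (q p.2)))) ^ 2))
        + 3 * 5 ^ n * A ^ 2 * ((5/3 : ℝ) ^ k * X + (5/3 : ℝ) ^ k * Y) := by
        rw [pow_add, h5]; ring

/-- Under the hypotheses guaranteeing `f^α ∈ dom(E)` (in particular
`‖α‖_∞ < 1/√(3·5ⁿ)`), the α-fractal operator `F^α : dom(E) → dom(E)`, `f ↦ f^α`, is
bounded with respect to the energy seminorm `‖u‖_E = √(E(u))`: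
`‖f^α‖_E ≤ √((3 + 3·5ⁿ ‖α‖² ‖T‖)/(1 - 3·5ⁿ ‖α‖²)) ‖f‖_E`. -/
theorem alpha_fractal_operator_bounded (q : Fin 3 → E2) (hq : Equidistant q)
    (n : ℕ) (α : (Fin n → Fin 3) → ℝ) (f Tf fα : E2 → ℝ)
    (Tnorm : ℝ) (hTnorm : 0 ≤ Tnorm)
    (A : ℝ)
    (hA : A = Finset.univ.sup' Finset.univ_nonempty (fun ω : Fin n → Fin 3 => |α ω|))
    (hAlt : A < 1 / Real.sqrt (3 * 5 ^ n))
    (hT : Tf (q 0) = f (q 0) ∧ Tf (q 1) = f (q 1) ∧ Tf (q 2) = f (q 2))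
    (hself : ∀ ω : Fin n → Fin 3, ∀ x ∈ gasket q,
      fα (Lw q (List.ofFn ω) x) = f (Lw q (List.ofFn ω) x) + α ω * (fα x - Tf x))
    (hfαcont : Continuous fα)
    (Ef ETf Efα : ℝ)
    (hEf : Tendsto (energyM q f) atTop (𝓝 Ef))
    (hETf : Tendsto (energyM q Tf) atTop (𝓝 ETf))
    (hTbound : ETf ≤ Tnorm * Ef)
    (hEfα : Tendsto (energyM q fα) atTop (𝓝 Efα)) :
    Real.sqrt Efα ≤
      Real.sqrt ((3 + 3 * 5 ^ n * A ^ 2 * Tnorm) / (1 - 3 * 5 ^ n * A ^ 2)) *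
        Real.sqrt Ef := by
  have hAb : ∀ ω : Fin n → Fin 3, |α ω| ≤ A := by
    intro ω
    rw [hA]
    exact Finset.le_sup' (fun ω : Fin n → Fin 3 => |α ω|) (Finset.mem_univ ω)
  have hA0 : 0 ≤ A := le_trans (abs_nonneg (α fun _ => 0)) (hAb fun _ => 0)
  -- 3 * 5^n * A^2 < 1
  set B : ℝ := 3 * 5 ^ n * A ^ 2 with hBdef
  have hs0 : (0:ℝ) < Real.sqrt (3 * 5 ^ n) := Real.sqrt_pos.2 (by positivity)
  have hss : Real.sqrt (3 * 5 ^ n) ^ 2 = 3 * 5 ^ n :=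
    Real.sq_sqrt (by positivity)
  have hAs : A * Real.sqrt (3 * 5 ^ n) < 1 := by
    calc A * Real.sqrt (3 * 5 ^ n) < 1 / Real.sqrt (3 * 5 ^ n) * Real.sqrt (3 * 5 ^ n) :=
        mul_lt_mul_of_pos_right hAlt hs0
      _ = 1 := by field_simp
  have hB1 : B < 1 := by
    have h1 : B = (A * Real.sqrt (3 * 5 ^ n)) ^ 2 := by
      rw [mul_pow, hss]; ring
    have h2 : 0 ≤ A * Real.sqrt (3 * 5 ^ n) := mul_nonneg hA0 hs0.le
    nlinarith
  have hB0 : 0 ≤ B := by positivity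
  -- limits along m = n + k
  have hT : Tendsto (fun k : ℕ => n + k) atTop atTop := by
    have := tendsto_add_atTop_nat n
    simpa [Nat.add_comm] using this
  have h1 : Tendsto (fun k => energyM q fα (n + k)) atTop (𝓝 Efα) := hEfα.comp hT
  have h2 : Tendsto (fun k => 3 * energyM q f (n + k)
      + B * (energyM q fα k + energyM q Tf k)) atTop
      (𝓝 (3 * Ef + B * (Efα + ETf))) :=
    ((hEf.comp hT).const_mul 3).add ((hEfα.add hETf).const_mul B)
  have hmain : Efα ≤ 3 * Ef + B * (Efα + ETf) := by
    refine le_of_tendsto_of_tendsto' h1 h2 fun k => ?_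
    exact key_step q n k α f Tf fα A hAb hself
  have hEf0 : 0 ≤ Ef := ge_of_tendsto' hEf fun m => energyM_nonneg q f m
  have hEfα0 : 0 ≤ Efα := ge_of_tendsto' hEfα fun m => energyM_nonneg q fα m
  have hBETf : B * ETf ≤ B * (Tnorm * Ef) := mul_le_mul_of_nonneg_left hTbound hB0
  -- Efα ≤ C * Ef
  have hC0 : 0 ≤ (3 + B * Tnorm) / (1 - B) := by
    apply div_nonneg (by positivity) (by linarith)
  have hfinal : Efα ≤ (3 + B * Tnorm) / (1 - B) * Ef := by
    rw [div_mul_eq_mul_div, le_div_iff₀ (by linarith : (0:ℝ) < 1 - B)]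
    nlinarith
  calc Real.sqrt Efα ≤ Real.sqrt ((3 + B * Tnorm) / (1 - B) * Ef) :=
      Real.sqrt_le_sqrt hfinal
    _ = Real.sqrt ((3 + B * Tnorm) / (1 - B)) * Real.sqrt Ef := Real.sqrt_mul hC0 Ef
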